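/- arXiv:2010.05505 — 4 statements merged into one kernel-verified Lean document; each statement's English description precedes it below -/
import Mathlib

section
/- For all integers m, n ≥ 0 and every real z with 0 ≤ z < 1, one has ∑_{a > m} (z^{a−m}/a)·C(a,n;z) = z · m! n!/(m+n+1)! · F(m+1, n+1; m+n+2; z), where the sum is over integers a > m. -/
/-- The rising factorial (Pochhammer symbol) (a)_n = a(a+1)⋯(a+n−1). -/
noncomputable def risingFactorial (a : ℝ) (n : ℕ) : ℝ := ∏ i ∈ Finset.range n, (a + i)

/-- The Gauss hypergeometric series F(α,β;γ;z) = ∑_{n≥0} (α)_n (β)_n / ((γ)_n n!) · zⁿ. -/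
noncomputable def F (α β γ z : ℝ) : ℝ :=
  ∑' n : ℕ, risingFactorial α n * risingFactorial β n /
    (risingFactorial γ n * (n.factorial : ℝ)) * z ^ n

/-- The connector C(m,n;z) = m! n!/(m+n)! · F(m, n; m+n+1; z). -/
noncomputable def C (m n : ℕ) (z : ℝ) : ℝ :=
  (m.factorial : ℝ) * n.factorial / (m + n).factorial * F m n (m + n + 1) z

lemma rf_zero (a : ℝ) : risingFactorial a 0 = 1 := by simp [risingFactorial]

lemma rf_succ (a : ℝ) (k : ℕ) :
    risingFactorial a (k + 1) = risingFactorial a k * (a + k) := by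
  simp [risingFactorial, Finset.prod_range_succ]

lemma rf_succ' (a : ℝ) (k : ℕ) :
    risingFactorial a (k + 1) = a * risingFactorial (a + 1) k := by
  rw [risingFactorial, Finset.prod_range_succ']
  simp only [Nat.cast_zero, add_zero, Nat.cast_add, Nat.cast_one]
  rw [mul_comm, risingFactorial]
  congr 1
  apply Finset.prod_congr rfl
  intro i _
  ring

lemma rf_fact (b : ℕ) (k : ℕ) :
    (b.factorial : ℝ) * risingFactorial (b + 1) k = ((b + k).factorial : ℝ) := by
  induction k with
  | zero => simp [rf_zero]
  | succ k ih =>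
      rw [rf_succ, ← mul_assoc, ih]
      have : (b + (k+1)).factorial = (b + k).factorial * (b + k + 1) := by
        rw [show b + (k+1) = (b+k) + 1 by ring, Nat.factorial_succ]; ring
      rw [this]
      push_cast
      ring

lemma rf_nonneg {a : ℝ} (ha : 0 ≤ a) (k : ℕ) : 0 ≤ risingFactorial a k := by
  apply Finset.prod_nonneg
  intro i _
  positivity

lemma rf_mono {a b : ℝ} (ha : 0 ≤ a) (hab : a ≤ b) (k : ℕ) :
    risingFactorial a k ≤ risingFactorial b k := by
  apply Finset.prod_le_prod
  · intro i _; positivity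
  · intro i _; linarith

lemma hockey (x : ℝ) (s : ℕ) :
    ∑ k ∈ Finset.range (s + 1), risingFactorial x k / (k.factorial : ℝ)
      = risingFactorial (x + 1) s / (s.factorial : ℝ) := by
  induction s with
  | zero => simp [rf_zero]
  | succ s ih =>
      rw [Finset.sum_range_succ, ih, rf_succ', rf_succ]
      have h1 : (s.factorial : ℝ) ≠ 0 := Nat.cast_ne_zero.2 s.factorial_ne_zero
      have h2 : ((s+1).factorial : ℝ) ≠ 0 := Nat.cast_ne_zero.2 (s+1).factorial_ne_zero
      rw [Nat.factorial_succ]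
      field_simp
      push_cast
      ring

lemma fact_ineq (a n k : ℕ) (h : k ≤ a) :
    a.factorial * (n + k).factorial ≤ (a + n + 1).factorial * k.factorial := by
  have h1 : (a + n + 1).factorial = (a+n+1).choose (n+1) * (n+1).factorial * a.factorial := by
    have := Nat.choose_mul_factorial_mul_factorial (show n+1 ≤ a+n+1 by omega)
    rw [show a+n+1-(n+1) = a by omega] at this
    omega
  have h2 : (n + k + 1).factorial = (n+k+1).choose (n+1) * (n+1).factorial * k.factorial := by
    have := Nat.choose_mul_factorial_mul_factorial (show n+1 ≤ n+k+1 by omega)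
    rw [show n+k+1-(n+1) = k by omega] at this
    omega
  have h3 : (n+k+1).choose (n+1) ≤ (a+n+1).choose (n+1) :=
    Nat.choose_le_choose _ (by omega)
  calc a.factorial * (n + k).factorial ≤ a.factorial * (n + k + 1).factorial := by
        exact Nat.mul_le_mul_left _ (Nat.factorial_le (by omega))
    _ = (n+k+1).choose (n+1) * (n+1).factorial * k.factorial * a.factorial := by rw [h2]; ring
    _ ≤ (a+n+1).choose (n+1) * (n+1).factorial * k.factorial * a.factorial := by
        apply Nat.mul_le_mul_right
        apply Nat.mul_le_mul_right
        exact Nat.mul_le_mul_right _ h3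
    _ = (a + n + 1).factorial * k.factorial := by rw [h1]; ring

/-- The double-sum term. -/
noncomputable def g (m n : ℕ) (z : ℝ) (p : ℕ × ℕ) : ℝ :=
  z ^ (p.1 + p.2 + 1) * ((m + p.1 + p.2).factorial : ℝ)
    * ((n.factorial : ℝ) * risingFactorial n p.2)
    / (((m + n + p.1 + p.2 + 1).factorial : ℝ) * (p.2.factorial : ℝ))

lemma fcast_ne (j : ℕ) : ((j.factorial : ℕ) : ℝ) ≠ 0 :=
  Nat.cast_ne_zero.2 j.factorial_ne_zero

lemma step_inner (m n i : ℕ) (z : ℝ) :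
    z ^ (i+1) / ((m+1+i : ℕ) : ℝ) * C (m+1+i) n z
      = ∑' k : ℕ, g m n z (i, k) := by
  unfold C F
  rw [← tsum_mul_left, ← tsum_mul_left]
  apply tsum_congr
  intro k
  have harg1 : ((m+1+i : ℕ):ℝ) = ((m+i : ℕ):ℝ) + 1 := by push_cast; ring
  have harg2 : ((m+1+i : ℕ):ℝ) + (n : ℝ) + 1 = ((m+n+i+1 : ℕ):ℝ) + 1 := by push_cast; ring
  have h1 : risingFactorial ((m+1+i : ℕ) : ℝ) k
      = ((m+i+k).factorial : ℝ) / ((m+i).factorial : ℝ) := by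
    rw [harg1, eq_div_iff (fcast_ne _), mul_comm]; exact rf_fact _ _
  have h2 : risingFactorial (((m+1+i : ℕ):ℝ) + n + 1) k
      = ((m+n+i+k+1).factorial : ℝ) / ((m+n+i+1).factorial : ℝ) := by
    rw [harg2, eq_div_iff (fcast_ne _), mul_comm,
      show m+n+i+k+1 = (m+n+i+1) + k by omega]
    exact rf_fact _ _
  have h3 : (m+1+i+n) = m+n+i+1 := by omega
  have h4 : ((m+1+i).factorial : ℝ) = ((m+i).factorial : ℝ) * ((m+1+i : ℕ) : ℝ) := by
    rw [show m+1+i = (m+i)+1 by omega, Nat.factorial_succ]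
    push_cast; ring
  rw [h3, h1, h2, h4]
  unfold g
  have hm : ((m+1+i : ℕ) : ℝ) ≠ 0 := by positivity
  field_simp
  ring

lemma g_nonneg (m n : ℕ) {z : ℝ} (hz0 : 0 ≤ z) (p : ℕ × ℕ) : 0 ≤ g m n z p := by
  unfold g
  have := rf_nonneg (show (0:ℝ) ≤ (n:ℝ) by positivity) p.2
  apply div_nonneg
  · apply mul_nonneg
    apply mul_nonneg (pow_nonneg hz0 _) (by positivity)
    positivity
  · positivity

lemma g_le (m n : ℕ) {z : ℝ} (hz0 : 0 ≤ z) (hz1 : z ≤ 1) (p : ℕ × ℕ) :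
    g m n z p ≤ z ^ p.1 * z ^ p.2 := by
  obtain ⟨i, k⟩ := p
  have hrf := rf_nonneg (show (0:ℝ) ≤ (n:ℝ) by positivity) k
  have hnum : ((m+i+k).factorial : ℝ) * ((n.factorial : ℝ) * risingFactorial n k)
      ≤ ((m+n+i+k+1).factorial : ℝ) * (k.factorial : ℝ) := by
    have ha : (n.factorial : ℝ) * risingFactorial n k ≤ ((n+k).factorial : ℝ) := by
      calc (n.factorial:ℝ) * risingFactorial n k
          ≤ (n.factorial:ℝ) * risingFactorial ((n:ℝ)+1) k :=
            mul_le_mul_of_nonneg_left (rf_mono (by positivity) (by linarith) k) (by positivity)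
        _ = _ := rf_fact n k
    calc ((m+i+k).factorial : ℝ) * ((n.factorial : ℝ) * risingFactorial n k)
        ≤ ((m+i+k).factorial : ℝ) * ((n+k).factorial : ℝ) :=
          mul_le_mul_of_nonneg_left ha (by positivity)
      _ ≤ ((m+n+i+k+1).factorial : ℝ) * (k.factorial : ℝ) := by
          have := fact_ineq (m+i+k) n k (by omega)
          rw [show m+i+k+n+1 = m+n+i+k+1 by omega] at this
          exact_mod_cast this
  have hfrac : ((m+i+k).factorial : ℝ) * ((n.factorial : ℝ) * risingFactorial n k)
      / (((m+n+i+k+1).factorial : ℝ) * (k.factorial : ℝ)) ≤ 1 :=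
    div_le_one_of_le₀ hnum (by positivity)
  have hge : g m n z (i,k) = z ^ (i+k+1) *
      (((m+i+k).factorial : ℝ) * ((n.factorial : ℝ) * risingFactorial n k)
        / (((m+n+i+k+1).factorial : ℝ) * (k.factorial : ℝ))) := by
    unfold g; ring
  calc g m n z (i,k) ≤ z ^ (i+k+1) * 1 := by
        rw [hge]
        exact mul_le_mul_of_nonneg_left hfrac (pow_nonneg hz0 _)
    _ ≤ z ^ (i+k) := by
        rw [mul_one]
        exact pow_le_pow_of_le_one hz0 hz1 (by omega)
    _ = z ^ i * z ^ k := pow_add z i k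

lemma g_summable (m n : ℕ) {z : ℝ} (hz0 : 0 ≤ z) (hz1 : z < 1) : Summable (g m n z) :=
  Summable.of_nonneg_of_le (g_nonneg m n hz0) (g_le m n hz0 hz1.le)
    ((summable_geometric_of_lt_one hz0 hz1).mul_of_nonneg
      (summable_geometric_of_lt_one hz0 hz1)
      (fun _ => pow_nonneg hz0 _) (fun _ => pow_nonneg hz0 _))

def diagEquiv : (Σ s : ℕ, Fin (s+1)) ≃ ℕ × ℕ where
  toFun x := (x.1 - x.2, x.2)
  invFun p := ⟨p.1 + p.2, ⟨p.2, by omega⟩⟩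
  left_inv := by
    rintro ⟨s, k⟩
    have hk : (k:ℕ) ≤ s := Nat.lt_succ_iff.1 k.isLt
    refine Sigma.ext (by simp; omega) ?_
    rw [Fin.heq_ext_iff (by simp; omega)]
  right_inv := by
    rintro ⟨i, k⟩
    simp

lemma diag_eval (m n : ℕ) (z : ℝ) (s : ℕ) :
    ∑ k ∈ Finset.range (s+1), g m n z (s - k, k)
      = z^(s+1) * ((m+s).factorial : ℝ) * ((n+s).factorial : ℝ)
        / (((m+n+s+1).factorial : ℝ) * (s.factorial : ℝ)) := by
  have h : ∀ k ∈ Finset.range (s+1), g m n z (s-k, k)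
      = (z^(s+1) * ((m+s).factorial : ℝ) * (n.factorial:ℝ) / ((m+n+s+1).factorial : ℝ))
        * (risingFactorial n k / (k.factorial : ℝ)) := by
    intro k hk
    have hks : k ≤ s := Nat.lt_succ_iff.1 (Finset.mem_range.1 hk)
    unfold g
    dsimp only
    rw [show s - k + k + 1 = s + 1 by omega, show m + (s-k) + k = m + s by omega,
        show m + n + (s-k) + k + 1 = m + n + s + 1 by omega]
    ring
  rw [Finset.sum_congr rfl h, ← Finset.mul_sum, hockey]
  rw [← rf_fact n s]
  field_simp

lemma rhs_eval (m n : ℕ) (z : ℝ) :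
    z * ((m.factorial : ℝ) * n.factorial / (m + n + 1).factorial) * F (m+1) (n+1) (m+n+2) z
      = ∑' s : ℕ, z^(s+1) * ((m+s).factorial : ℝ) * ((n+s).factorial : ℝ)
          / (((m+n+s+1).factorial : ℝ) * (s.factorial : ℝ)) := by
  unfold F
  rw [← tsum_mul_left]
  apply tsum_congr
  intro s
  have h1 : risingFactorial ((m:ℝ)+1) s = ((m+s).factorial:ℝ)/(m.factorial:ℝ) := by
    rw [eq_div_iff (fcast_ne _), mul_comm]; exact rf_fact _ _
  have h2 : risingFactorial ((n:ℝ)+1) s = ((n+s).factorial:ℝ)/(n.factorial:ℝ) := by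
    rw [eq_div_iff (fcast_ne _), mul_comm]; exact rf_fact _ _
  have h3 : risingFactorial ((m:ℝ)+(n:ℝ)+2) s
      = ((m+n+s+1).factorial:ℝ)/((m+n+1).factorial:ℝ) := by
    rw [show (m:ℝ)+(n:ℝ)+2 = ((m+n+1 : ℕ):ℝ)+1 by push_cast; ring,
        eq_div_iff (fcast_ne _), mul_comm, show m+n+s+1 = (m+n+1)+s by omega]
    exact rf_fact _ _
  rw [h1, h2, h3]
  field_simp
  ring

def subEquiv (m : ℕ) : ℕ ≃ {a : ℕ // m < a} where
  toFun i := ⟨m+1+i, by omega⟩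
  invFun a := (a : ℕ) - (m+1)
  left_inv i := by simp
  right_inv a := by
    ext
    simp
    omega

/-- ∑_{a>m} (z^{a−m}/a)·C(a,n;z) = z · m!n!/(m+n+1)! · F(m+1,n+1;m+n+2;z). -/
theorem connector_sum_eval (m n : ℕ) (z : ℝ) (hz0 : 0 ≤ z) (hz1 : z < 1) :
    ∑' a : {a : ℕ // m < a}, z ^ ((a : ℕ) - m) / (a : ℕ) * C a n z
      = z * ((m.factorial : ℝ) * n.factorial / (m + n + 1).factorial) *
        F (m + 1) (n + 1) (m + n + 2) z := by
  have hg := g_summable m n hz0 hz1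
  set e1 := subEquiv m with he1
  have hsig : Summable (fun x : Σ s : ℕ, Fin (s+1) => g m n z (diagEquiv x)) :=
    (Equiv.summable_iff diagEquiv).2 hg
  calc ∑' a : {a : ℕ // m < a}, z ^ ((a : ℕ) - m) / (a : ℕ) * C a n z
      = ∑' i : ℕ, z ^ (((e1 i : {a : ℕ // m < a}) : ℕ) - m) / ((e1 i : {a : ℕ // m < a}) : ℕ)
          * C ((e1 i : {a : ℕ // m < a}) : ℕ) n z := (e1.tsum_eq _).symm
    _ = ∑' i : ℕ, ∑' k : ℕ, g m n z (i, k) := by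
        apply tsum_congr
        intro i
        show z ^ ((m+1+i) - m) / ((m+1+i : ℕ) : ℝ) * C (m+1+i) n z = _
        rw [show m+1+i-m = i+1 by omega]
        exact step_inner m n i z
    _ = ∑' p : ℕ × ℕ, g m n z p := (hg.tsum_prod).symm
    _ = ∑' x : Σ s : ℕ, Fin (s+1), g m n z (diagEquiv x) := (diagEquiv.tsum_eq _).symm
    _ = ∑' s : ℕ, ∑' k : Fin (s+1), g m n z (diagEquiv ⟨s, k⟩) := hsig.tsum_sigma
    _ = ∑' s : ℕ, ∑ k ∈ Finset.range (s+1), g m n z (s - k, k) := by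
        apply tsum_congr
        intro s
        rw [tsum_fintype]
        exact Fin.sum_univ_eq_sum_range (fun k => g m n z (s - k, k)) (s+1)
    _ = ∑' s : ℕ, z^(s+1) * ((m+s).factorial : ℝ) * ((n+s).factorial : ℝ)
          / (((m+n+s+1).factorial : ℝ) * (s.factorial : ℝ)) := by
        apply tsum_congr
        intro s
        exact diag_eval m n z s
    _ = z * ((m.factorial : ℝ) * n.factorial / (m + n + 1).factorial) *
        F (m + 1) (n + 1) (m + n + 2) z := (rhs_eval m n z).symm
end

section
/- For all integers m, n ≥ 0 and every real z with 0 ≤ z < 1, one has the symmetric connector identity ∑_{a > m} (z^{a−m}/a)·C(a,n;z) = ∑_{b > n} (z^{b−n}/b)·C(m,b;z), where the sums are over integers a > m and b > n respectively. -/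
namespace ConnectorAux

lemma rising_nat (a k : ℕ) : risingFactorial (a : ℝ) k = (a.ascFactorial k : ℝ) := by
  induction k with
  | zero => simp [risingFactorial]
  | succ k ih =>
      rw [risingFactorial, Finset.prod_range_succ, ← risingFactorial, ih, Nat.ascFactorial_succ]
      push_cast; ring

lemma hockey (n p : ℕ) :
    ∑ k ∈ Finset.range (p + 1), (n + k - 1).choose k = (n + p).choose p := by
  induction p with
  | zero => simp
  | succ p ih =>
      rw [Finset.sum_range_succ, ih, show n + (p + 1) - 1 = n + p by omega]
      exact (Nat.choose_succ_succ (n + p) p).symm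

lemma choose_le_pow_succ : ∀ n k : ℕ, (n + k).choose k ≤ (k + 1) ^ n
  | 0, k => by simp
  | n + 1, k => by
      calc (n + 1 + k).choose k
          = ∑ i ∈ Finset.range (k + 1), (n + 1 + i - 1).choose i := (hockey (n + 1) k).symm
        _ ≤ ∑ _i ∈ Finset.range (k + 1), (k + 1) ^ n := by
            refine Finset.sum_le_sum fun i hi => ?_
            rw [show n + 1 + i - 1 = n + i by omega]
            exact le_trans (choose_le_pow_succ n i)
              (Nat.pow_le_pow_left (by have := Finset.mem_range.mp hi; omega) n)
        _ = (k + 1) ^ (n + 1) := by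
            rw [Finset.sum_const, Finset.card_range, smul_eq_mul]; ring

lemma asc_mono {a b : ℕ} (k : ℕ) (h : a ≤ b) : a.ascFactorial k ≤ b.ascFactorial k := by
  induction k with
  | zero => simp [Nat.ascFactorial_zero]
  | succ k ih =>
      rw [Nat.ascFactorial_succ, Nat.ascFactorial_succ]
      exact Nat.mul_le_mul (by omega) ih

/-- term of the series defining `C a b z` (without the `z^k`). -/
noncomputable def T (a b k : ℕ) : ℝ :=
  (a.factorial : ℝ) * (b.factorial : ℝ) / ((a + b).factorial : ℝ) *
    ((a.ascFactorial k : ℝ) * (b.ascFactorial k : ℝ) /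
      (((a + b + 1).ascFactorial k : ℝ) * (k.factorial : ℝ)))

lemma C_eq (a b : ℕ) (z : ℝ) : C a b z = ∑' k : ℕ, T a b k * z ^ k := by
  unfold C F
  rw [← tsum_mul_left]
  refine tsum_congr fun k => ?_
  rw [show ((a : ℝ) + b + 1) = ((a + b + 1 : ℕ) : ℝ) by push_cast; ring,
    rising_nat, rising_nat, rising_nat]
  unfold T; ring

lemma T_nonneg (a b k : ℕ) : 0 ≤ T a b k := by unfold T; positivity

lemma T_eq_div (a b k : ℕ) : T a b k =
    ((a.factorial * b.factorial * (a.ascFactorial k * b.ascFactorial k) : ℕ) : ℝ) /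
      (((a + b).factorial * ((a + b + 1).ascFactorial k * k.factorial) : ℕ) : ℝ) := by
  unfold T; push_cast; ring

lemma den_pos (a b k : ℕ) :
    0 < (a + b).factorial * ((a + b + 1).ascFactorial k * k.factorial) := by
  have h1 := Nat.factorial_pos (a + b)
  have h2 := Nat.ascFactorial_pos (a + b) k
  have h3 := Nat.factorial_pos k
  positivity

lemma T_le_choose (a b k : ℕ) : T a b k ≤ ((b + k).choose k : ℝ) := by
  rw [T_eq_div, div_le_iff₀ (by exact_mod_cast den_pos a b k)]
  rw [← Nat.cast_mul]
  exact_mod_cast calc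
    a.factorial * b.factorial * (a.ascFactorial k * b.ascFactorial k)
        ≤ (a + b).factorial * ((a + b + 1).ascFactorial k * (k.factorial * (b + k).choose k)) := by
          refine Nat.mul_le_mul ?_ (Nat.mul_le_mul ?_ ?_)
          · exact Nat.le_of_dvd (Nat.factorial_pos _)
              (Nat.factorial_mul_factorial_dvd_factorial_add a b)
          · exact asc_mono k (by omega)
          · rw [Nat.ascFactorial_eq_factorial_mul_choose']
            exact Nat.mul_le_mul_left _ (Nat.choose_le_choose k (by omega))
    _ = (b + k).choose k * ((a + b).factorial * ((a + b + 1).ascFactorial k * k.factorial)) := by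
          ring

lemma T_le_pow (a b k : ℕ) : T a b k ≤ ((k : ℝ) + 1) ^ b :=
  le_trans (T_le_choose a b k) (by exact_mod_cast choose_le_pow_succ b k)

lemma geom_summable (b : ℕ) {z : ℝ} (h0 : 0 < z) (h1 : z < 1) :
    Summable (fun k : ℕ => ((k : ℝ) + 1) ^ b * z ^ k) := by
  have h : Summable (fun k : ℕ => (k : ℝ) ^ b * z ^ k) :=
    summable_pow_mul_geometric_of_norm_lt_one b (by rw [Real.norm_eq_abs, abs_of_pos h0]; exact h1)
  have h2 : Summable (fun k : ℕ => ((k : ℝ) + 1) ^ b * z ^ (k + 1)) := by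
    have := (summable_nat_add_iff 1).2 h
    refine this.congr fun k => ?_
    push_cast; ring
  have h3 := h2.mul_right z⁻¹
  refine h3.congr fun k => ?_
  field_simp [pow_succ, h0.ne']
  ring

lemma summable_T (a b : ℕ) {z : ℝ} (h0 : 0 < z) (h1 : z < 1) :
    Summable (fun k : ℕ => T a b k * z ^ k) := by
  refine Summable.of_nonneg_of_le (fun k => mul_nonneg (T_nonneg a b k) (by positivity))
    (fun k => ?_) (geom_summable b h0 h1)
  exact mul_le_mul_of_nonneg_right (T_le_pow a b k) (by positivity)

lemma C_nonneg (a b : ℕ) {z : ℝ} (h0 : 0 ≤ z) : 0 ≤ C a b z := by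
  rw [C_eq]
  exact tsum_nonneg fun k => mul_nonneg (T_nonneg a b k) (by positivity)

lemma C_le (a b : ℕ) {z : ℝ} (h0 : 0 < z) (h1 : z < 1) :
    C a b z ≤ ∑' k : ℕ, ((k : ℝ) + 1) ^ b * z ^ k := by
  rw [C_eq]
  exact Summable.tsum_le_tsum
    (fun k => mul_le_mul_of_nonneg_right (T_le_pow a b k) (by positivity))
    (summable_T a b h0 h1) (geom_summable b h0 h1)

end ConnectorAux

namespace ConnectorAux

lemma term_alg (m n j k : ℕ) (z : ℝ) :
    z ^ (j + 1) / ((m + 1 + j : ℕ) : ℝ) * (T (m + 1 + j) n k * z ^ k)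
      = z ^ (j + k + 1) *
        (((m + j + k).factorial : ℝ) * (n.factorial : ℝ) * (((n + k - 1).choose k : ℕ) : ℝ)) /
        ((m + n + j + k + 1).factorial : ℝ) := by
  have n1 : (m + 1 + j).factorial = (m + 1 + j) * (m + j).factorial := by
    rw [show m + 1 + j = (m + j) + 1 by omega, Nat.factorial_succ]
  have r2 : (m + j).factorial * (m + 1 + j).ascFactorial k = (m + j + k).factorial := by
    rw [show m + 1 + j = (m + j) + 1 by omega]
    exact Nat.factorial_mul_ascFactorial _ _
  have r3 : (m + 1 + j + n).factorial * (m + 1 + j + n + 1).ascFactorial k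
      = (m + n + j + k + 1).factorial := by
    have h := Nat.factorial_mul_ascFactorial (m + 1 + j + n) k
    rwa [show m + 1 + j + n + k = m + n + j + k + 1 by omega] at h
  have c1 : ((m + 1 + j).factorial : ℝ) = ((m + 1 + j : ℕ) : ℝ) * ((m + j).factorial : ℝ) := by
    exact_mod_cast congrArg (Nat.cast : ℕ → ℝ) n1
  have c2 : ((m + j + k).factorial : ℝ)
      = ((m + j).factorial : ℝ) * ((m + 1 + j).ascFactorial k : ℝ) := by
    exact_mod_cast congrArg (Nat.cast : ℕ → ℝ) r2.symm
  have c3 : ((m + n + j + k + 1).factorial : ℝ)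
      = ((m + 1 + j + n).factorial : ℝ) * ((m + 1 + j + n + 1).ascFactorial k : ℝ) := by
    exact_mod_cast congrArg (Nat.cast : ℕ → ℝ) r3.symm
  have c4 : ((n.ascFactorial k : ℕ) : ℝ)
      = (k.factorial : ℝ) * (((n + k - 1).choose k : ℕ) : ℝ) := by
    exact_mod_cast congrArg (Nat.cast : ℕ → ℝ) (Nat.ascFactorial_eq_factorial_mul_choose' n k)
  have hA : ((m + 1 + j : ℕ) : ℝ) ≠ 0 := Nat.cast_ne_zero.mpr (by omega)
  have hf2 : ((m + 1 + j + n).factorial : ℝ) ≠ 0 := Nat.cast_ne_zero.mpr (Nat.factorial_ne_zero _)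
  have hasc : (((m + 1 + j + n + 1).ascFactorial k : ℕ) : ℝ) ≠ 0 :=
    Nat.cast_ne_zero.mpr (Nat.ascFactorial_pos (m + 1 + j + n) k).ne'
  have hk : (k.factorial : ℝ) ≠ 0 := Nat.cast_ne_zero.mpr (Nat.factorial_ne_zero _)
  unfold T
  rw [c1, c4, c2, c3]
  field_simp
  ring

/-- the regrouped double-sum term. -/
noncomputable def Wf (m n : ℕ) (z : ℝ) (j k : ℕ) : ℝ :=
  z ^ (j + k + 1) *
    (((m + j + k).factorial : ℝ) * (n.factorial : ℝ) * (((n + k - 1).choose k : ℕ) : ℝ)) /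
    ((m + n + j + k + 1).factorial : ℝ)

lemma Wf_nonneg (m n : ℕ) {z : ℝ} (h0 : 0 ≤ z) (j k : ℕ) : 0 ≤ Wf m n z j k := by
  unfold Wf; positivity

lemma Wf_le (m n : ℕ) {z : ℝ} (h0 : 0 ≤ z) (h1 : z < 1) (j k : ℕ) :
    Wf m n z j k ≤ z ^ (j + 1) * (((k : ℝ) + 1) ^ n * z ^ k) := by
  have hnat : (m + j + k).factorial * (n.factorial * (n + k - 1).choose k)
      ≤ (m + n + j + k + 1).factorial * (k + 1) ^ n := by
    calc (m + j + k).factorial * (n.factorial * (n + k - 1).choose k)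
        ≤ (m + n + j + k + 1).factorial * (n + k).choose k := by
          have h1 : (m + j + k).factorial * n.factorial ≤ (m + n + j + k + 1).factorial := by
            calc (m + j + k).factorial * n.factorial ≤ ((m + j + k) + n).factorial :=
                  Nat.le_of_dvd (Nat.factorial_pos _)
                    (Nat.factorial_mul_factorial_dvd_factorial_add _ _)
              _ ≤ (m + n + j + k + 1).factorial := Nat.factorial_le (by omega)
          have h2 : (n + k - 1).choose k ≤ (n + k).choose k :=
            Nat.choose_le_choose k (by omega)
          calc (m + j + k).factorial * (n.factorial * (n + k - 1).choose k)
              = (m + j + k).factorial * n.factorial * (n + k - 1).choose k := by ring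
            _ ≤ (m + n + j + k + 1).factorial * (n + k).choose k := Nat.mul_le_mul h1 h2
      _ ≤ (m + n + j + k + 1).factorial * (k + 1) ^ n :=
          Nat.mul_le_mul_left _ (choose_le_pow_succ n k)
  have hden : (0 : ℝ) < ((m + n + j + k + 1).factorial : ℝ) := by
    exact_mod_cast Nat.factorial_pos _
  unfold Wf
  rw [div_le_iff₀ hden]
  calc z ^ (j + k + 1) *
        (((m + j + k).factorial : ℝ) * (n.factorial : ℝ) * (((n + k - 1).choose k : ℕ) : ℝ))
      ≤ z ^ (j + k + 1) * (((m + n + j + k + 1).factorial : ℝ) * ((k : ℝ) + 1) ^ n) := by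
        refine mul_le_mul_of_nonneg_left ?_ (by positivity)
        have := hnat
        calc ((m + j + k).factorial : ℝ) * (n.factorial : ℝ) * (((n + k - 1).choose k : ℕ) : ℝ)
            = (((m + j + k).factorial * (n.factorial * (n + k - 1).choose k) : ℕ) : ℝ) := by
              push_cast; ring
          _ ≤ (((m + n + j + k + 1).factorial * (k + 1) ^ n : ℕ) : ℝ) := by exact_mod_cast hnat
          _ = ((m + n + j + k + 1).factorial : ℝ) * ((k : ℝ) + 1) ^ n := by push_cast; ring
    _ = z ^ (j + 1) * (((k : ℝ) + 1) ^ n * z ^ k) * ((m + n + j + k + 1).factorial : ℝ) := by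
        rw [show j + k + 1 = (j + 1) + k by omega, pow_add]; ring

end ConnectorAux

namespace ConnectorAux

lemma sum_p (m n p : ℕ) (z : ℝ) :
    ∑ c ∈ Finset.HasAntidiagonal.antidiagonal p, Wf m n z c.1 c.2
      = z ^ (p + 1) * ((m + p).factorial : ℝ) * ((n + p).factorial : ℝ) /
          ((p.factorial : ℝ) * ((m + n + p + 1).factorial : ℝ)) := by
  rw [Finset.Nat.sum_antidiagonal_eq_sum_range_succ_mk]
  have hstep : ∀ i ∈ Finset.range (p + 1), Wf m n z i (p - i)
      = z ^ (p + 1) * ((m + p).factorial : ℝ) * (n.factorial : ℝ) /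
          ((m + n + p + 1).factorial : ℝ) * (((n + (p - i) - 1).choose (p - i) : ℕ) : ℝ) := by
    intro i hi
    have hip : i ≤ p := by have := Finset.mem_range.mp hi; omega
    unfold Wf
    rw [show i + (p - i) + 1 = p + 1 by omega, show m + i + (p - i) = m + p by omega,
      show m + n + i + (p - i) + 1 = m + n + p + 1 by omega]
    ring
  rw [Finset.sum_congr rfl hstep, ← Finset.mul_sum]
  have hsum : ∑ i ∈ Finset.range (p + 1), (((n + (p - i) - 1).choose (p - i) : ℕ) : ℝ)
      = (((n + p).choose p : ℕ) : ℝ) := by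
    rw [← Nat.cast_sum]
    congr 1
    calc ∑ i ∈ Finset.range (p + 1), (n + (p - i) - 1).choose (p - i)
        = ∑ i ∈ Finset.range (p + 1), (n + i - 1).choose i := by
          rw [← Finset.sum_range_reflect (fun i => (n + i - 1).choose i) (p + 1)]
          exact Finset.sum_congr rfl fun i hi => by
            have := Finset.mem_range.mp hi
            congr 1 <;> omega
      _ = (n + p).choose p := hockey n p
  rw [hsum]
  have hid : (((n + p).choose p : ℕ) : ℝ) * (n.factorial : ℝ) * (p.factorial : ℝ)
      = ((n + p).factorial : ℝ) := by
    exact_mod_cast congrArg (Nat.cast : ℕ → ℝ)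
      (Nat.add_choose_mul_factorial_mul_factorial n p)
  have hp : (p.factorial : ℝ) ≠ 0 := Nat.cast_ne_zero.mpr (Nat.factorial_ne_zero _)
  have hbig : ((m + n + p + 1).factorial : ℝ) ≠ 0 :=
    Nat.cast_ne_zero.mpr (Nat.factorial_ne_zero _)
  field_simp
  linear_combination z ^ (p + 1) * hid

end ConnectorAux

namespace ConnectorAux

lemma summable_Wf_inner (m n : ℕ) {z : ℝ} (h0 : 0 < z) (h1 : z < 1) (j : ℕ) :
    Summable (fun k => Wf m n z j k) := by
  refine Summable.of_nonneg_of_le (Wf_nonneg m n h0.le j) (fun k => ?_)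
    ((geom_summable n h0 h1).mul_left (z ^ (j + 1)))
  exact Wf_le m n h0.le h1 j k

lemma tsum_Wf_le (m n : ℕ) {z : ℝ} (h0 : 0 < z) (h1 : z < 1) (j : ℕ) :
    ∑' k, Wf m n z j k ≤ z ^ (j + 1) * ∑' k : ℕ, ((k : ℝ) + 1) ^ n * z ^ k := by
  calc ∑' k, Wf m n z j k
      ≤ ∑' k : ℕ, z ^ (j + 1) * (((k : ℝ) + 1) ^ n * z ^ k) :=
        Summable.tsum_le_tsum (Wf_le m n h0.le h1 j) (summable_Wf_inner m n h0 h1 j)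
          ((geom_summable n h0 h1).mul_left _)
    _ = z ^ (j + 1) * ∑' k : ℕ, ((k : ℝ) + 1) ^ n * z ^ k := tsum_mul_left

lemma summable_Wf_outer (m n : ℕ) {z : ℝ} (h0 : 0 < z) (h1 : z < 1) :
    Summable (fun j => ∑' k, Wf m n z j k) := by
  set K := ∑' k : ℕ, ((k : ℝ) + 1) ^ n * z ^ k with hK
  have hgeo : Summable (fun j : ℕ => z ^ (j + 1) * K) := by
    have h := (summable_geometric_of_lt_one h0.le h1).mul_left (z * K)
    refine h.congr fun j => ?_
    rw [pow_succ]; ring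
  refine Summable.of_nonneg_of_le
    (fun j => tsum_nonneg fun k => Wf_nonneg m n h0.le j k)
    (fun j => tsum_Wf_le m n h0 h1 j) hgeo

lemma summable_Wf_prod (m n : ℕ) {z : ℝ} (h0 : 0 < z) (h1 : z < 1) :
    Summable (fun p : ℕ × ℕ => Wf m n z p.1 p.2) := by
  refine (summable_prod_of_nonneg ?_).2
    ⟨fun j => summable_Wf_inner m n h0 h1 j, summable_Wf_outer m n h0 h1⟩
  intro p
  exact Wf_nonneg m n h0.le p.1 p.2

def shiftEquiv (m : ℕ) : ℕ ≃ {a : ℕ // m < a} where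
  toFun := fun j => ⟨m + 1 + j, by omega⟩
  invFun := fun a => (a : ℕ) - (m + 1)
  left_inv := fun j => by simp
  right_inv := fun a => Subtype.ext (by have := a.2; simp; omega)

set_option maxHeartbeats 1000000 in
lemma key (m n : ℕ) {z : ℝ} (h0 : 0 < z) (h1 : z < 1) :
    ∑' a : {a : ℕ // m < a}, z ^ ((a : ℕ) - m) / ((a : ℕ) : ℝ) * C (a : ℕ) n z
      = ∑' p : ℕ, z ^ (p + 1) * ((m + p).factorial : ℝ) * ((n + p).factorial : ℝ) /
          ((p.factorial : ℝ) * ((m + n + p + 1).factorial : ℝ)) := by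
  rw [← (shiftEquiv m).tsum_eq]
  have hterm : ∀ j : ℕ,
      z ^ (((shiftEquiv m j : ℕ)) - m) / (((shiftEquiv m j : ℕ)) : ℝ) * C ((shiftEquiv m j : ℕ)) n z
        = ∑' k, Wf m n z j k := by
    intro j
    have hej : (shiftEquiv m j : ℕ) = m + 1 + j := rfl
    rw [hej, C_eq, ← tsum_mul_left]
    refine tsum_congr fun k => ?_
    rw [show (m + 1 + j) - m = j + 1 by omega]
    exact term_alg m n j k z
  rw [tsum_congr hterm]
  calc ∑' j, ∑' k, Wf m n z j k
      = ∑' p : ℕ × ℕ, Wf m n z p.1 p.2 :=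
        (Summable.tsum_prod' (summable_Wf_prod m n h0 h1) (summable_Wf_inner m n h0 h1)).symm
    _ = ∑' x : (Σ p : ℕ, Finset.HasAntidiagonal.antidiagonal p),
          Wf m n z ((Finset.HasAntidiagonal.sigmaAntidiagonalEquivProd x : ℕ × ℕ)).1
            ((Finset.HasAntidiagonal.sigmaAntidiagonalEquivProd x : ℕ × ℕ)).2 :=
        ((Finset.HasAntidiagonal.sigmaAntidiagonalEquivProd (A := ℕ)).tsum_eq
          (fun p : ℕ × ℕ => Wf m n z p.1 p.2)).symm
    _ = ∑' p : ℕ, ∑' c : (Finset.HasAntidiagonal.antidiagonal p : Finset (ℕ × ℕ)),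
          Wf m n z (c : ℕ × ℕ).1 (c : ℕ × ℕ).2 := by
        refine Summable.tsum_sigma' (fun p => (hasSum_fintype _).summable) ?_
        exact (Equiv.summable_iff _).2 (summable_Wf_prod m n h0 h1)
    _ = ∑' p : ℕ, ∑ c ∈ Finset.HasAntidiagonal.antidiagonal p, Wf m n z c.1 c.2 := by
        refine tsum_congr fun p => ?_
        rw [tsum_fintype]
        exact Finset.sum_finset_coe (fun c : ℕ × ℕ => Wf m n z c.1 c.2) _
    _ = ∑' p : ℕ, z ^ (p + 1) * ((m + p).factorial : ℝ) * ((n + p).factorial : ℝ) /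
          ((p.factorial : ℝ) * ((m + n + p + 1).factorial : ℝ)) :=
        tsum_congr fun p => sum_p m n p z

end ConnectorAux

namespace ConnectorAux

lemma C_comm (a b : ℕ) (z : ℝ) : C a b z = C b a z := by
  unfold C F
  rw [Nat.add_comm a b, ← tsum_mul_left, ← tsum_mul_left]
  refine tsum_congr fun k => ?_
  rw [show ((a : ℝ) + b + 1) = ((b : ℝ) + a + 1) by ring]
  ring

end ConnectorAux


/-- The symmetric connector identity
∑_{a>m} (z^{a−m}/a)·C(a,n;z) = ∑_{b>n} (z^{b−n}/b)·C(m,b;z). -/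
theorem connector_symmetry (m n : ℕ) (z : ℝ) (hz0 : 0 ≤ z) (hz1 : z < 1) :
    ∑' a : {a : ℕ // m < a}, z ^ ((a : ℕ) - m) / (a : ℕ) * C a n z
      = ∑' b : {b : ℕ // n < b}, z ^ ((b : ℕ) - n) / (b : ℕ) * C m b z := by
  rcases eq_or_lt_of_le hz0 with h | h
  · have h1 : ∀ a : {a : ℕ // m < a},
        z ^ ((a : ℕ) - m) / ((a : ℕ) : ℝ) * C (a : ℕ) n z = 0 := by
      intro a
      rw [← h, zero_pow (by have := a.2; omega), zero_div, zero_mul]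
    have h2 : ∀ b : {b : ℕ // n < b},
        z ^ ((b : ℕ) - n) / ((b : ℕ) : ℝ) * C m (b : ℕ) z = 0 := by
      intro b
      rw [← h, zero_pow (by have := b.2; omega), zero_div, zero_mul]
    rw [tsum_congr h1, tsum_congr h2, tsum_zero, tsum_zero]
  · have hcomm : ∀ b : {b : ℕ // n < b},
        z ^ ((b : ℕ) - n) / ((b : ℕ) : ℝ) * C m (b : ℕ) z
          = z ^ ((b : ℕ) - n) / ((b : ℕ) : ℝ) * C (b : ℕ) m z := by
      intro b; rw [ConnectorAux.C_comm]
    rw [tsum_congr hcomm, ConnectorAux.key m n h hz1, ConnectorAux.key n m h hz1]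
    refine tsum_congr fun p => ?_
    rw [show n + m + p + 1 = m + n + p + 1 by omega]
    ring
end

section
/- For all integers m ≥ 0 and n ≥ 1 and every real z with 0 ≤ z < 1, one has ∑_{a > m} ((1 − z^{a−m})/a)·C(a,n;z) = (1/n)·C(m,n;z), where the sum is over integers a > m. -/
lemma fact_mul_rf (b k : ℕ) :
    (b.factorial : ℝ) * risingFactorial ((b : ℝ) + 1) k = ((b + k).factorial : ℝ) := by
  induction k with
  | zero => simp [rf_zero]
  | succ k ih =>
    rw [rf_succ, ← mul_assoc, ih, show b + (k + 1) = (b + k) + 1 from rfl,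
      Nat.factorial_succ]
    push_cast
    ring

lemma rf_eq (b k : ℕ) :
    risingFactorial ((b : ℝ) + 1) k = ((b + k).factorial : ℝ) / (b.factorial : ℝ) := by
  rw [eq_div_iff (by exact_mod_cast b.factorial_ne_zero), mul_comm]
  exact fact_mul_rf b k

lemma rf_zero_eval (k : ℕ) : risingFactorial 0 (k + 1) = 0 := by
  apply Finset.prod_eq_zero (Finset.mem_range.mpr (Nat.succ_pos k))
  simp

/-- Series term of `C (b+1) (q+1) z / (b+1)`. -/
noncomputable def tt (q b k : ℕ) (z : ℝ) : ℝ :=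
  ((q : ℝ) + 1) * ((b + k).factorial : ℝ) * ((q + k).factorial : ℝ) /
    ((k.factorial : ℝ) * ((b + q + k + 2).factorial : ℝ)) * z ^ k

lemma tt_nonneg (q b k : ℕ) {z : ℝ} (hz0 : 0 ≤ z) : 0 ≤ tt q b k z := by
  unfold tt; positivity

lemma C_eq (b q : ℕ) (z : ℝ) :
    C (b + 1) (q + 1) z = ((b : ℝ) + 1) * ∑' k, tt q b k z := by
  rw [C, F, ← tsum_mul_left, ← tsum_mul_left]
  refine tsum_congr fun k => ?_
  have h1 : ((b + 1 : ℕ) : ℝ) = (b : ℝ) + 1 := by push_cast; ring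
  have h2 : ((q + 1 : ℕ) : ℝ) = (q : ℝ) + 1 := by push_cast; ring
  have h3 : ((b : ℝ) + 1) + ((q : ℝ) + 1) + 1 = ((b + q + 2 : ℕ) : ℝ) + 1 := by
    push_cast; ring
  rw [h1, h2, h3, rf_eq b, rf_eq q, rf_eq (b + q + 2), tt]
  rw [show b + 1 + (q + 1) = b + q + 2 from by omega,
    show b + q + 2 + k = b + q + k + 2 from by omega,
    Nat.factorial_succ b, Nat.factorial_succ q]
  have e1 : ((b + k).factorial : ℝ) ≠ 0 := by exact_mod_cast (b + k).factorial_ne_zero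
  have e2 : ((q + k).factorial : ℝ) ≠ 0 := by exact_mod_cast (q + k).factorial_ne_zero
  have e3 : ((b + q + k + 2).factorial : ℝ) ≠ 0 := by
    exact_mod_cast (b + q + k + 2).factorial_ne_zero
  have e4 : ((b + q + 2).factorial : ℝ) ≠ 0 := by exact_mod_cast (b + q + 2).factorial_ne_zero
  have e5 : (b.factorial : ℝ) ≠ 0 := by exact_mod_cast b.factorial_ne_zero
  have e6 : (q.factorial : ℝ) ≠ 0 := by exact_mod_cast q.factorial_ne_zero
  have e7 : (k.factorial : ℝ) ≠ 0 := by exact_mod_cast k.factorial_ne_zero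
  push_cast
  field_simp

noncomputable def ff (q k b : ℕ) : ℝ :=
  ((b + k).factorial : ℝ) / (((q : ℝ) + 1) * ((b + q + k + 1).factorial : ℝ))

noncomputable def Acoef (m q k : ℕ) (z : ℝ) : ℝ :=
  ((q + k).factorial : ℝ) * ((m + k).factorial : ℝ) /
    ((k.factorial : ℝ) * ((m + q + k + 1).factorial : ℝ)) * z ^ k

lemma ff_nonneg (q k b : ℕ) : 0 ≤ ff q k b := by unfold ff; positivity

lemma ff_step (q k b : ℕ) :
    ff q k b - ff q k (b + 1) = ((b + k).factorial : ℝ) / ((b + q + k + 2).factorial : ℝ) := by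
  unfold ff
  rw [show b + 1 + q + k + 1 = (b + q + k + 1) + 1 from by omega,
    show b + 1 + k = (b + k) + 1 from by omega,
    show b + q + k + 2 = (b + q + k + 1) + 1 from by omega,
    Nat.factorial_succ ((b + q + k + 1)), Nat.factorial_succ (b + k)]
  have e1 : ((b + k).factorial : ℝ) ≠ 0 := by exact_mod_cast (b + k).factorial_ne_zero
  have e3 : ((b + q + k + 1).factorial : ℝ) ≠ 0 := by
    exact_mod_cast (b + q + k + 1).factorial_ne_zero
  have hq : ((q : ℝ) + 1) ≠ 0 := by positivity
  push_cast
  field_simp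
  ring

lemma ff_le (q k b : ℕ) : ff q k b ≤ 1 / ((b : ℝ) + 1) := by
  unfold ff
  rw [div_le_div_iff₀ (by positivity) (by positivity)]
  have h1 : ((b + k).factorial : ℝ) * ((b : ℝ) + 1) ≤ ((b + k + 1).factorial : ℝ) := by
    rw [Nat.factorial_succ]
    push_cast
    have : ((b : ℝ) + 1) ≤ ((b : ℝ) + (k : ℝ) + 1) := by
      have : (0:ℝ) ≤ k := by positivity
      linarith
    nlinarith [show (0:ℝ) < ((b+k).factorial : ℝ) by positivity]
  have h2 : ((b + k + 1).factorial : ℝ) ≤ ((b + q + k + 1).factorial : ℝ) := by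
    exact_mod_cast Nat.factorial_le (by omega)
  have h3 : ((b + q + k + 1).factorial : ℝ) ≤ ((q : ℝ) + 1) * ((b + q + k + 1).factorial : ℝ) := by
    nlinarith [show (0:ℝ) < ((b+q+k+1).factorial : ℝ) by positivity,
      show (0:ℝ) ≤ (q:ℝ) by positivity]
  calc ((b + k).factorial : ℝ) * ((b : ℝ) + 1) ≤ ((b + k + 1).factorial : ℝ) := h1
    _ ≤ ((b + q + k + 1).factorial : ℝ) := h2
    _ ≤ ((q : ℝ) + 1) * ((b + q + k + 1).factorial : ℝ) := h3
    _ = 1 * (((q : ℝ) + 1) * ((b + q + k + 1).factorial : ℝ)) := by ring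

lemma hasSum_ff (m q k : ℕ) :
    HasSum (fun j : ℕ => ff q k (m + j) - ff q k (m + j + 1)) (ff q k m) := by
  set g : ℕ → ℝ := fun j => ff q k (m + j) - ff q k (m + j + 1) with hg
  have hnn : ∀ j, 0 ≤ g j := by
    intro j
    rw [hg]
    simp only
    rw [ff_step]
    positivity
  have hps : ∀ N : ℕ, ∑ j ∈ Finset.range N, g j = ff q k m - ff q k (m + N) := by
    intro N
    exact Finset.sum_range_sub' (fun j => ff q k (m + j)) N
  have hsum : Summable g := by
    apply summable_of_sum_range_le hnn
    intro N
    rw [hps]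
    have := ff_nonneg q k (m + N)
    linarith
  have htends : Filter.Tendsto (fun N => ∑ j ∈ Finset.range N, g j) Filter.atTop
      (nhds (ff q k m)) := by
    have h0 : Filter.Tendsto (fun N : ℕ => ff q k (m + N)) Filter.atTop (nhds 0) := by
      apply squeeze_zero (fun N => ff_nonneg q k (m + N))
        (fun N => le_trans (ff_le q k (m + N)) ?_)
      · exact tendsto_one_div_add_atTop_nhds_zero_nat
      · rw [div_le_div_iff₀ (by positivity) (by positivity)]
        have : (N : ℝ) ≤ ((m + N : ℕ) : ℝ) := by
          push_cast; linarith [show (0:ℝ) ≤ m by positivity]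
        linarith
    have := Filter.Tendsto.const_sub (ff q k m) h0
    simp only [sub_zero] at this
    simpa [hps] using this
  have := hsum.hasSum.tendsto_sum_nat
  have heq := tendsto_nhds_unique this htends
  rw [← heq]
  exact hsum.hasSum

lemma tt_eq (q b k : ℕ) (z : ℝ) :
    tt q b k z = (((q : ℝ) + 1) * ((q + k).factorial : ℝ) / (k.factorial : ℝ) * z ^ k) *
      (((b + k).factorial : ℝ) / ((b + q + k + 2).factorial : ℝ)) := by
  unfold tt
  have e7 : (k.factorial : ℝ) ≠ 0 := by exact_mod_cast k.factorial_ne_zero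
  have e3 : ((b + q + k + 2).factorial : ℝ) ≠ 0 := by
    exact_mod_cast (b + q + k + 2).factorial_ne_zero
  field_simp

lemma hasSum_tt_col (m q k : ℕ) (z : ℝ) :
    HasSum (fun j : ℕ => tt q (m + j) k z) (Acoef m q k z) := by
  have h := (hasSum_ff m q k).mul_left
    (((q : ℝ) + 1) * ((q + k).factorial : ℝ) / (k.factorial : ℝ) * z ^ k)
  have heq : (fun j : ℕ => (((q : ℝ) + 1) * ((q + k).factorial : ℝ) / (k.factorial : ℝ) * z ^ k) *
      (ff q k (m + j) - ff q k (m + j + 1))) = fun j => tt q (m + j) k z := by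
    funext j
    rw [ff_step, tt_eq]
  rw [heq] at h
  convert h using 1
  · rfl
  unfold Acoef ff
  have e7 : (k.factorial : ℝ) ≠ 0 := by exact_mod_cast k.factorial_ne_zero
  have e3 : ((m + q + k + 1).factorial : ℝ) ≠ 0 := by
    exact_mod_cast (m + q + k + 1).factorial_ne_zero
  have hq : ((q : ℝ) + 1) ≠ 0 := by positivity
  field_simp

lemma fact_ratio_le (q k : ℕ) :
    ((q + k).factorial : ℝ) ≤ (k.factorial : ℝ) * ((k : ℝ) + (q : ℝ) + 1) ^ q := by
  induction q with
  | zero => simp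
  | succ q ih =>
    have h1 : ((q + 1 + k).factorial : ℝ) = ((q : ℝ) + (k : ℝ) + 1) * ((q + k).factorial : ℝ) := by
      rw [show q + 1 + k = (q + k) + 1 from by omega, Nat.factorial_succ]
      push_cast; ring
    rw [h1]
    have hb : ((q : ℝ) + (k : ℝ) + 1) ≤ ((k : ℝ) + (q + 1 : ℕ) + 1) := by push_cast; linarith
    have hpow : ((k : ℝ) + (q : ℝ) + 1) ^ q ≤ ((k : ℝ) + (q + 1 : ℕ) + 1) ^ q := by
      apply pow_le_pow_left₀ (by positivity)
      push_cast; linarith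
    calc ((q : ℝ) + (k : ℝ) + 1) * ((q + k).factorial : ℝ)
        ≤ ((q : ℝ) + (k : ℝ) + 1) * ((k.factorial : ℝ) * ((k : ℝ) + (q : ℝ) + 1) ^ q) := by
          apply mul_le_mul_of_nonneg_left ih (by positivity)
      _ ≤ ((k : ℝ) + (q + 1 : ℕ) + 1) * ((k.factorial : ℝ) * ((k : ℝ) + (q + 1 : ℕ) + 1) ^ q) := by
          apply mul_le_mul hb (mul_le_mul_of_nonneg_left hpow (by positivity)) (by positivity)
            (by positivity)
      _ = (k.factorial : ℝ) * ((k : ℝ) + (q + 1 : ℕ) + 1) ^ (q + 1) := by ring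

lemma summable_shiftpow (c q : ℕ) {z : ℝ} (hz0 : 0 ≤ z) (hz1 : z < 1) :
    Summable (fun k : ℕ => ((k : ℝ) + (c : ℝ)) ^ q * z ^ k) := by
  rcases eq_or_lt_of_le hz0 with h0 | h0
  · apply summable_of_ne_finset_zero (s := {0})
    intro k hk
    simp only [Finset.mem_singleton] at hk
    rw [← h0, zero_pow hk, mul_zero]
  · have h := summable_pow_mul_geometric_of_norm_lt_one (R := ℝ) q
      (r := z) (by rw [Real.norm_eq_abs, abs_of_nonneg hz0]; exact hz1)
    have h2 : Summable (fun k : ℕ => (((k + c : ℕ)) : ℝ) ^ q * z ^ (k + c)) :=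
      (summable_nat_add_iff c).2 h
    have h3 : Summable (fun k : ℕ => (((k : ℝ) + (c : ℝ)) ^ q * z ^ k) * z ^ c) := by
      apply h2.congr
      intro k
      push_cast
      rw [pow_add]
      ring
    have h4 := h3.mul_right (z ^ c)⁻¹
    apply h4.congr
    intro k
    rw [mul_assoc, mul_inv_cancel₀ (by positivity), mul_one]

lemma Acoef_le (m q k : ℕ) {z : ℝ} (hz0 : 0 ≤ z) :
    (((q + k).factorial : ℝ) * ((m + k).factorial : ℝ) /
      ((k.factorial : ℝ) * ((m + q + k + 1).factorial : ℝ)) * z ^ k)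
      ≤ ((k : ℝ) + (q : ℝ) + 1) ^ q * z ^ k := by
  apply mul_le_mul_of_nonneg_right _ (by positivity)
  rw [div_le_iff₀ (by positivity)]
  have h1 : ((q + k).factorial : ℝ) ≤ (k.factorial : ℝ) * ((k : ℝ) + (q : ℝ) + 1) ^ q :=
    fact_ratio_le q k
  have h2 : ((m + k).factorial : ℝ) ≤ ((m + q + k + 1).factorial : ℝ) := by
    exact_mod_cast Nat.factorial_le (by omega)
  calc ((q + k).factorial : ℝ) * ((m + k).factorial : ℝ)
      ≤ ((k.factorial : ℝ) * ((k : ℝ) + (q : ℝ) + 1) ^ q) * ((m + q + k + 1).factorial : ℝ) := by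
        apply mul_le_mul h1 h2 (by positivity) (by positivity)
    _ = ((k : ℝ) + (q : ℝ) + 1) ^ q * ((k.factorial : ℝ) * ((m + q + k + 1).factorial : ℝ)) := by
        ring

lemma summable_Acoef (m q : ℕ) {z : ℝ} (hz0 : 0 ≤ z) (hz1 : z < 1) :
    Summable (fun k => Acoef m q k z) := by
  have hs := summable_shiftpow (q + 1) q hz0 hz1
  apply Summable.of_nonneg_of_le (fun k => by unfold Acoef; positivity)
    (fun k => ?_) hs
  have := Acoef_le m q k hz0
  unfold Acoef
  refine le_trans this (le_of_eq ?_)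
  push_cast
  ring_nf

lemma summable_P (m q : ℕ) {z : ℝ} (hz0 : 0 ≤ z) (hz1 : z < 1) :
    Summable (fun jk : ℕ × ℕ => tt q (m + jk.1) jk.2 z) := by
  have hswap : Summable (fun kj : ℕ × ℕ => tt q (m + kj.2) kj.1 z) := by
    apply (summable_prod_of_nonneg (fun kj => tt_nonneg q (m + kj.2) kj.1 hz0)).2
    constructor
    · exact fun k => (hasSum_tt_col m q k z).summable
    · apply (summable_Acoef m q hz0 hz1).congr
      intro k
      exact ((hasSum_tt_col m q k z).tsum_eq).symm
  exact hswap.prod_symm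

lemma tsum_P (m q : ℕ) {z : ℝ} (hz0 : 0 ≤ z) (hz1 : z < 1) :
    ∑' jk : ℕ × ℕ, tt q (m + jk.1) jk.2 z = ∑' k, Acoef m q k z := by
  have hswap : Summable (fun kj : ℕ × ℕ => tt q (m + kj.2) kj.1 z) :=
    (summable_P m q hz0 hz1).prod_symm
  have h1 : ∑' jk : ℕ × ℕ, tt q (m + jk.1) jk.2 z
      = ∑' kj : ℕ × ℕ, tt q (m + kj.2) kj.1 z := by
    rw [← (Equiv.prodComm ℕ ℕ).tsum_eq (fun kj : ℕ × ℕ => tt q (m + kj.2) kj.1 z)]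
    rfl
  rw [h1, hswap.tsum_prod' (fun k => (hasSum_tt_col m q k z).summable)]
  exact tsum_congr fun k => (hasSum_tt_col m q k z).tsum_eq

noncomputable def Qcoef (m q r : ℕ) (z : ℝ) : ℝ :=
  ((m + r).factorial : ℝ) * ((q + r + 1).factorial : ℝ) /
    ((r.factorial : ℝ) * ((m + q + r + 2).factorial : ℝ)) * z ^ (r + 1)

def eAnti : (Σ _r : ℕ, Fin (_r + 1)) ≃ ℕ × ℕ where
  toFun x := (x.1 - x.2.val, x.2.val)
  invFun p := ⟨p.1 + p.2, ⟨p.2, by omega⟩⟩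
  left_inv := by
    rintro ⟨r, k⟩
    have hk : k.val ≤ r := by omega
    simp only
    congr 1
    · omega
    · apply Fin.heq_ext_iff ?_ |>.2
      · simp
      · omega
  right_inv := by rintro ⟨j, k⟩; simp

lemma hockey_s5 (q r : ℕ) :
    ∑ k ∈ Finset.range (r + 1), ((q + k).factorial : ℝ) / (k.factorial : ℝ)
      = ((q + r + 1).factorial : ℝ) / (((q : ℝ) + 1) * (r.factorial : ℝ)) := by
  induction r with
  | zero =>
    simp [Nat.factorial_succ]
    field_simp
  | succ r ih =>
    rw [Finset.sum_range_succ, ih]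
    have e1 : ((r + 1).factorial : ℝ) = ((r : ℝ) + 1) * (r.factorial : ℝ) := by
      rw [Nat.factorial_succ]; push_cast; ring
    have e2 : ((q + (r + 1)).factorial : ℝ) = ((q + r + 1).factorial : ℝ) := by
      norm_num [show q + (r+1) = q + r + 1 from by omega]
    have e3 : ((q + (r + 1) + 1).factorial : ℝ)
        = ((q : ℝ) + (r : ℝ) + 2) * ((q + r + 1).factorial : ℝ) := by
      rw [show q + (r+1) + 1 = (q + r + 1) + 1 from by omega, Nat.factorial_succ]
      push_cast; ring
    rw [e1, e2, e3]
    have n1 : ((q + r + 1).factorial : ℝ) ≠ 0 := by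
      exact_mod_cast (q + r + 1).factorial_ne_zero
    have n2 : (r.factorial : ℝ) ≠ 0 := by exact_mod_cast r.factorial_ne_zero
    have n3 : ((q : ℝ) + 1) ≠ 0 := by positivity
    have n4 : ((r : ℝ) + 1) ≠ 0 := by positivity
    field_simp
    ring

lemma Qrow_sum (m q r : ℕ) (z : ℝ) :
    ∑ k ∈ Finset.range (r + 1), z ^ ((r - k) + 1) * tt q (m + (r - k)) k z
      = Qcoef m q r z := by
  have hterm : ∀ k ∈ Finset.range (r + 1),
      z ^ ((r - k) + 1) * tt q (m + (r - k)) k z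
        = (z ^ (r + 1) * (((q : ℝ) + 1) * ((m + r).factorial : ℝ) /
            ((m + q + r + 2).factorial : ℝ))) * (((q + k).factorial : ℝ) / (k.factorial : ℝ)) := by
    intro k hk
    have hkr : k ≤ r := by simpa using Nat.lt_succ_iff.1 (Finset.mem_range.1 hk)
    unfold tt
    rw [show m + (r - k) + k = m + r from by omega,
      show m + (r - k) + q + k + 2 = m + q + r + 2 from by omega]
    have hzp : z ^ ((r - k) + 1) * z ^ k = z ^ (r + 1) := by
      rw [← pow_add, show (r - k) + 1 + k = r + 1 from by omega]
    calc z ^ ((r - k) + 1) * (((q : ℝ) + 1) * ((m + r).factorial : ℝ) * ((q + k).factorial : ℝ) /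
          ((k.factorial : ℝ) * ((m + q + r + 2).factorial : ℝ)) * z ^ k)
        = (((q : ℝ) + 1) * ((m + r).factorial : ℝ) * ((q + k).factorial : ℝ) /
          ((k.factorial : ℝ) * ((m + q + r + 2).factorial : ℝ))) *
          (z ^ ((r - k) + 1) * z ^ k) := by ring
      _ = (((q : ℝ) + 1) * ((m + r).factorial : ℝ) * ((q + k).factorial : ℝ) /
          ((k.factorial : ℝ) * ((m + q + r + 2).factorial : ℝ))) * z ^ (r + 1) := by rw [hzp]
      _ = (z ^ (r + 1) * (((q : ℝ) + 1) * ((m + r).factorial : ℝ) /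
            ((m + q + r + 2).factorial : ℝ))) * (((q + k).factorial : ℝ) / (k.factorial : ℝ)) := by
          ring
  rw [Finset.sum_congr rfl hterm, ← Finset.mul_sum, hockey_s5]
  unfold Qcoef
  have n1 : ((m + q + r + 2).factorial : ℝ) ≠ 0 := by
    exact_mod_cast (m + q + r + 2).factorial_ne_zero
  have n2 : (r.factorial : ℝ) ≠ 0 := by exact_mod_cast r.factorial_ne_zero
  have n3 : ((q : ℝ) + 1) ≠ 0 := by positivity
  field_simp

lemma hasSum_Qrow (m q r : ℕ) (z : ℝ) :
    HasSum (fun k : Fin (r + 1) =>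
      z ^ ((eAnti ⟨r, k⟩).1 + 1) * tt q (m + (eAnti ⟨r, k⟩).1) (eAnti ⟨r, k⟩).2 z)
      (Qcoef m q r z) := by
  have h := hasSum_fintype (fun k : Fin (r + 1) =>
    z ^ ((eAnti ⟨r, k⟩).1 + 1) * tt q (m + (eAnti ⟨r, k⟩).1) (eAnti ⟨r, k⟩).2 z)
  convert h using 1
  rw [← Qrow_sum m q r z]
  simp only [eAnti, Equiv.coe_fn_mk]
  exact (Fin.sum_univ_eq_sum_range
    (fun k : ℕ => z ^ ((r - k) + 1) * tt q (m + (r - k)) k z) (r + 1)).symm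

lemma summable_Q (m q : ℕ) {z : ℝ} (hz0 : 0 ≤ z) (hz1 : z < 1) :
    Summable (fun jk : ℕ × ℕ => z ^ (jk.1 + 1) * tt q (m + jk.1) jk.2 z) := by
  apply Summable.of_nonneg_of_le (fun jk => by
      have := tt_nonneg q (m + jk.1) jk.2 hz0; positivity)
    (fun jk => ?_) (summable_P m q hz0 hz1)
  have h1 : z ^ (jk.1 + 1) ≤ 1 := pow_le_one₀ hz0 (le_of_lt hz1)
  have h2 := tt_nonneg q (m + jk.1) jk.2 hz0
  nlinarith

lemma hasSum_Qcoef (m q : ℕ) {z : ℝ} (hz0 : 0 ≤ z) (hz1 : z < 1) :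
    HasSum (fun r => Qcoef m q r z)
      (∑' jk : ℕ × ℕ, z ^ (jk.1 + 1) * tt q (m + jk.1) jk.2 z) := by
  have hQ := summable_Q m q hz0 hz1
  have hQe : Summable (fun x : Σ _r : ℕ, Fin (_r + 1) =>
      z ^ ((eAnti x).1 + 1) * tt q (m + (eAnti x).1) (eAnti x).2 z) :=
    (eAnti.summable_iff).2 hQ
  have h := hQe.hasSum.sigma (fun r => hasSum_Qrow m q r z)
  rwa [eAnti.tsum_eq (fun jk : ℕ × ℕ => z ^ (jk.1 + 1) * tt q (m + jk.1) jk.2 z)] at h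

noncomputable def Qcoef' (m q : ℕ) (z : ℝ) : ℕ → ℝ
  | 0 => 0
  | (r + 1) => Qcoef m q r z

lemma dterm_eq (m q p : ℕ) (z : ℝ) :
    (m.factorial : ℝ) * ((q + 1).factorial : ℝ) / ((m + (q + 1)).factorial : ℝ) *
      (risingFactorial (m : ℝ) p * risingFactorial ((q + 1 : ℕ) : ℝ) p /
        (risingFactorial ((m : ℝ) + ((q + 1 : ℕ) : ℝ) + 1) p * (p.factorial : ℝ)) * z ^ p)
      = ((q : ℝ) + 1) * (Acoef m q p z - Qcoef' m q z p) := by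
  have hq1 : ((q + 1 : ℕ) : ℝ) = (q : ℝ) + 1 := by push_cast; ring
  match p with
  | 0 =>
    simp only [rf_zero, Qcoef', Acoef, pow_zero, Nat.factorial_zero]
    rw [show m + q + 0 + 1 = m + (q + 1) from by omega, show q + 0 = q from rfl,
      show m + 0 = m from rfl, Nat.factorial_succ q]
    have n1 : ((m + (q + 1)).factorial : ℝ) ≠ 0 := by
      exact_mod_cast (m + (q + 1)).factorial_ne_zero
    push_cast
    field_simp
    ring
  | (r + 1) =>
    match m with
    | 0 =>
      rw [Nat.cast_zero, rf_zero_eval]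
      simp only [Qcoef', Qcoef, Acoef, zero_mul, mul_zero, zero_div]
      rw [show (0 : ℕ) + (r + 1) = r + 1 from by omega,
        show (0 : ℕ) + q + (r + 1) + 1 = q + r + 2 from by omega,
        show q + (r + 1) = q + r + 1 from by omega,
        show (0 : ℕ) + r = r from by omega,
        show (0 : ℕ) + q + r + 2 = q + r + 2 from by omega]
      have n1 : ((q + r + 2).factorial : ℝ) ≠ 0 := by
        exact_mod_cast (q + r + 2).factorial_ne_zero
      have n2 : ((r + 1).factorial : ℝ) ≠ 0 := by exact_mod_cast (r + 1).factorial_ne_zero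
      have n3 : (r.factorial : ℝ) ≠ 0 := by exact_mod_cast r.factorial_ne_zero
      rw [eq_comm, mul_eq_zero]
      right
      rw [sub_eq_zero]
      field_simp
    | (b + 1) =>
      rw [hq1, show ((b + 1 : ℕ) : ℝ) = (b : ℝ) + 1 from by push_cast; ring,
        show (b : ℝ) + 1 + ((q : ℝ) + 1) + 1 = ((b + q + 2 : ℕ) : ℝ) + 1 from by push_cast; ring,
        rf_eq b, rf_eq q, rf_eq (b + q + 2)]
      simp only [Qcoef', Qcoef, Acoef]
      rw [show b + 1 + (q + 1) = b + q + 2 from by omega,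
        show b + q + 2 + (r + 1) = b + q + r + 3 from by omega,
        show b + (r + 1) = b + r + 1 from by omega,
        show q + (r + 1) = q + r + 1 from by omega,
        show b + 1 + (r + 1) = b + r + 2 from by omega,
        show b + 1 + q + (r + 1) + 1 = b + q + r + 3 from by omega,
        show b + 1 + r = b + r + 1 from by omega,
        show b + 1 + q + r + 2 = b + q + r + 3 from by omega,
        show (b + 1).factorial = (b + 1) * b.factorial from Nat.factorial_succ b,
        show (q + 1).factorial = (q + 1) * q.factorial from Nat.factorial_succ q,
        show (b + r + 2).factorial = (b + r + 2) * (b + r + 1).factorial from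
          Nat.factorial_succ (b + r + 1),
        show (r + 1).factorial = (r + 1) * r.factorial from Nat.factorial_succ r]
      have n1 : ((b + r + 1).factorial : ℝ) ≠ 0 := by
        exact_mod_cast (b + r + 1).factorial_ne_zero
      have n2 : ((q + r + 1).factorial : ℝ) ≠ 0 := by
        exact_mod_cast (q + r + 1).factorial_ne_zero
      have n3 : ((b + q + r + 3).factorial : ℝ) ≠ 0 := by
        exact_mod_cast (b + q + r + 3).factorial_ne_zero
      have n4 : ((b + q + 2).factorial : ℝ) ≠ 0 := by
        exact_mod_cast (b + q + 2).factorial_ne_zero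
      have n5 : (b.factorial : ℝ) ≠ 0 := by exact_mod_cast b.factorial_ne_zero
      have n6 : (q.factorial : ℝ) ≠ 0 := by exact_mod_cast q.factorial_ne_zero
      have n7 : (r.factorial : ℝ) ≠ 0 := by exact_mod_cast r.factorial_ne_zero
      push_cast
      field_simp
      ring

lemma C_main_eq (m q : ℕ) {z : ℝ} (hz0 : 0 ≤ z) (hz1 : z < 1) :
    C m (q + 1) z
      = ((q : ℝ) + 1) * ((∑' k, Acoef m q k z) - ∑' r, Qcoef m q r z) := by
  have hA := summable_Acoef m q hz0 hz1
  have hQc := (hasSum_Qcoef m q hz0 hz1).summable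
  have hQ' : Summable (Qcoef' m q z) := by
    apply (summable_nat_add_iff 1).mp
    exact hQc.congr fun r => rfl
  have hQ'tsum : ∑' p, Qcoef' m q z p = ∑' r, Qcoef m q r z := by
    rw [hQ'.tsum_eq_zero_add]
    simp [Qcoef']
  rw [C, F, ← tsum_mul_left]
  calc ∑' p : ℕ, (m.factorial : ℝ) * ((q + 1).factorial : ℝ) / ((m + (q + 1)).factorial : ℝ) *
        (risingFactorial (m : ℝ) p * risingFactorial ((q + 1 : ℕ) : ℝ) p /
          (risingFactorial ((m : ℝ) + ((q + 1 : ℕ) : ℝ) + 1) p * (p.factorial : ℝ)) * z ^ p)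
      = ∑' p : ℕ, ((q : ℝ) + 1) * (Acoef m q p z - Qcoef' m q z p) :=
        tsum_congr fun p => dterm_eq m q p z
    _ = ((q : ℝ) + 1) * ∑' p : ℕ, (Acoef m q p z - Qcoef' m q z p) := tsum_mul_left
    _ = ((q : ℝ) + 1) * ((∑' k, Acoef m q k z) - ∑' p, Qcoef' m q z p) := by
        rw [hA.tsum_sub hQ']
    _ = ((q : ℝ) + 1) * ((∑' k, Acoef m q k z) - ∑' r, Qcoef m q r z) := by rw [hQ'tsum]

/-- shift equivalence `ℕ ≃ {a // m < a}`. -/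
def eShift (m : ℕ) : ℕ ≃ {a : ℕ // m < a} where
  toFun j := ⟨m + 1 + j, by omega⟩
  invFun a := a.val - (m + 1)
  left_inv j := by simp
  right_inv a := by
    ext
    have := a.2
    simp
    omega

/-- ∑_{a>m} ((1 − z^{a−m})/a)·C(a,n;z) = (1/n)·C(m,n;z) for n ≥ 1. -/
theorem connector_transport (m n : ℕ) (hn : 1 ≤ n) (z : ℝ) (hz0 : 0 ≤ z) (hz1 : z < 1) :
    ∑' a : {a : ℕ // m < a}, (1 - z ^ ((a : ℕ) - m)) / (a : ℕ) * C a n z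
      = 1 / (n : ℝ) * C m n z := by
  obtain ⟨q, rfl⟩ : ∃ q, n = q + 1 := ⟨n - 1, by omega⟩
  rw [← (eShift m).tsum_eq]
  have hstep : ∀ j : ℕ,
      (1 - z ^ (((eShift m j : ℕ)) - m)) / ((eShift m j : ℕ) : ℝ) * C (eShift m j : ℕ) (q + 1) z
        = ∑' k, (tt q (m + j) k z - z ^ (j + 1) * tt q (m + j) k z) := by
    intro j
    have hv : (eShift m j : ℕ) = (m + j) + 1 := by simp [eShift]; omega
    rw [hv, show ((m + j) + 1) - m = j + 1 from by omega, C_eq (m + j) q z]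
    have hc : (((m + j) + 1 : ℕ) : ℝ) = ((m + j : ℕ) : ℝ) + 1 := by push_cast; ring
    have hne : ((m + j : ℕ) : ℝ) + 1 ≠ 0 := by positivity
    rw [hc]
    have hcollapse : (1 - z ^ (j + 1)) / (((m + j : ℕ) : ℝ) + 1) *
        ((((m + j : ℕ) : ℝ) + 1) * ∑' k, tt q (m + j) k z)
        = (1 - z ^ (j + 1)) * ∑' k, tt q (m + j) k z := by
      field_simp
    rw [hcollapse, ← tsum_mul_left]
    exact tsum_congr fun k => by ring
  rw [tsum_congr hstep]
  have hP := summable_P m q hz0 hz1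
  have hQ := summable_Q m q hz0 hz1
  have hU : Summable (fun jk : ℕ × ℕ =>
      tt q (m + jk.1) jk.2 z - z ^ (jk.1 + 1) * tt q (m + jk.1) jk.2 z) := hP.sub hQ
  have h2 : ∑' (j : ℕ), ∑' (k : ℕ), (tt q (m + j) k z - z ^ (j + 1) * tt q (m + j) k z)
      = ∑' jk : ℕ × ℕ, (tt q (m + jk.1) jk.2 z - z ^ (jk.1 + 1) * tt q (m + jk.1) jk.2 z) :=
    (hU.tsum_prod' (fun j => hU.prod_factor j)).symm
  rw [h2, hP.tsum_sub hQ, tsum_P m q hz0 hz1, ← (hasSum_Qcoef m q hz0 hz1).tsum_eq,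
    C_main_eq m q hz0 hz1]
  have hq : ((q : ℝ) + 1) ≠ 0 := by positivity
  have hcast : (((q + 1 : ℕ)) : ℝ) = (q : ℝ) + 1 := by push_cast; ring
  rw [hcast]
  field_simp
end

section
/- Let 0 < q < 1, let α, β, γ be complex numbers with 1 − q^k γ ≠ 0 for all integers k ≥ 0, and let z be complex with |z| < 1. Then the q-hypergeometric series satisfies the contiguous relation (α−γ)·φ_q(α,β;qγ;z) = (1−γ)α·φ_q(α,β;γ;z) − (1−α)γ·φ_q(qα,β;qγ;z). -/
/-- The q-shifted factorial (a;q)_n = (1−a)(1−qa)⋯(1−q^{n−1}a). -/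
noncomputable def qPoch (q a : ℂ) (n : ℕ) : ℂ := ∏ i ∈ Finset.range n, (1 - q ^ i * a)

/-- The q-hypergeometric series φ_q(α,β;γ;z) = ∑_{n≥0} (α;q)_n (β;q)_n / ((γ;q)_n (q;q)_n) · zⁿ. -/
noncomputable def qHyp (q α β γ z : ℂ) : ℂ :=
  ∑' n : ℕ, qPoch q α n * qPoch q β n / (qPoch q γ n * qPoch q q n) * z ^ n

lemma qPoch_succ (q a : ℂ) (n : ℕ) :
    qPoch q a (n + 1) = qPoch q a n * (1 - q ^ n * a) := Finset.prod_range_succ _ _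

lemma qPoch_shift (q a : ℂ) (n : ℕ) :
    qPoch q a (n + 1) = (1 - a) * qPoch q (q * a) n := by
  unfold qPoch
  rw [Finset.prod_range_succ', pow_zero, one_mul, mul_comm]
  congr 1
  apply Finset.prod_congr rfl
  intro i _
  ring

lemma qPoch_ne_zero (q a : ℂ) (n : ℕ) (h : ∀ k : ℕ, (1 : ℂ) - q ^ k * a ≠ 0) :
    qPoch q a n ≠ 0 :=
  Finset.prod_ne_zero_iff.2 fun i _ => h i

set_option maxHeartbeats 1000000 in
lemma qPoch_norm_le (q : ℝ) (hq0 : 0 < q) (hq1 : q < 1) (a : ℂ) (n : ℕ) :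
    ‖qPoch (q : ℂ) a n‖ ≤ Real.exp (‖a‖ / (1 - q)) := by
  have hq1' : (0:ℝ) < 1 - q := by linarith
  calc ‖qPoch (q:ℂ) a n‖ ≤ ∏ i ∈ Finset.range n, ‖(1 : ℂ) - (q:ℂ) ^ i * a‖ := by unfold qPoch; rw [norm_prod]
    _ ≤ ∏ i ∈ Finset.range n, Real.exp (q ^ i * ‖a‖) := by
        apply Finset.prod_le_prod
        · intros; positivity
        · intro i _
          calc ‖(1:ℂ) - (q:ℂ)^i * a‖ ≤ ‖(1:ℂ)‖ + ‖(q:ℂ)^i * a‖ := norm_sub_le _ _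
            _ = 1 + q^i * ‖a‖ := by
                simp [norm_mul, norm_pow, Complex.norm_real, abs_of_pos hq0]
            _ ≤ Real.exp (q^i * ‖a‖) := by
                rw [add_comm]; exact Real.add_one_le_exp _
    _ = Real.exp (∑ i ∈ Finset.range n, q^i * ‖a‖) := (Real.exp_sum _ _).symm
    _ ≤ _ := by
        apply Real.exp_le_exp.2
        rw [← Finset.sum_mul, div_eq_mul_inv, mul_comm ‖a‖,
          geom_sum_eq (by intro h; rw [h] at hq1; exact lt_irrefl 1 hq1)]
        have h1 : (q ^ n - 1) / (q - 1) = (1 - q^n)/(1-q) := by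
          rw [div_eq_div_iff (by linarith) (by linarith)]; ring
        rw [h1]
        apply mul_le_mul_of_nonneg_right _ (norm_nonneg a)
        rw [div_le_iff₀ hq1', inv_mul_cancel₀ (ne_of_gt hq1')]
        have : (0:ℝ) ≤ q ^ n := by positivity
        linarith

lemma one_sub_sum_le_prod (s : Finset ℕ) (x : ℕ → ℝ) (h0 : ∀ i ∈ s, 0 ≤ x i)
    (h1 : ∀ i ∈ s, x i ≤ 1) :
    1 - ∑ i ∈ s, x i ≤ ∏ i ∈ s, (1 - x i) := by
  induction s using Finset.cons_induction with
  | empty => simp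
  | cons a s ha ih =>
    rw [Finset.prod_cons, Finset.sum_cons]
    have h0a := h0 a (Finset.mem_cons_self a s)
    have h1a := h1 a (Finset.mem_cons_self a s)
    have ih' := ih (fun i hi => h0 i (Finset.mem_cons_of_mem hi))
      (fun i hi => h1 i (Finset.mem_cons_of_mem hi))
    have hs : 0 ≤ ∑ i ∈ s, x i := Finset.sum_nonneg fun i hi => h0 i (Finset.mem_cons_of_mem hi)
    nlinarith [Finset.sum_nonneg (fun i hi => h0 i (Finset.mem_cons_of_mem hi))]

lemma geom_bound (q : ℝ) (hq0 : 0 ≤ q) (hq1 : q < 1) (n : ℕ) :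
    ∑ i ∈ Finset.range n, q ^ i ≤ 1 / (1 - q) := by
  have hq1' : (0:ℝ) < 1 - q := by linarith
  rw [geom_sum_eq (by intro h; rw [h] at hq1; exact lt_irrefl 1 hq1)]
  have h1 : (q ^ n - 1) / (q - 1) = (1 - q ^ n) / (1 - q) := by
    rw [div_eq_div_iff (by linarith) (by linarith)]; ring
  rw [h1]
  have hn' : (0:ℝ) ≤ q ^ n := by positivity
  gcongr
  linarith

lemma qPoch_norm_lb (q : ℝ) (hq0 : 0 < q) (hq1 : q < 1) (a : ℂ)
    (h : ∀ k : ℕ, (1 : ℂ) - (q : ℂ) ^ k * a ≠ 0) :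
    ∃ c : ℝ, 0 < c ∧ ∀ n, c ≤ ‖qPoch (q : ℂ) a n‖ := by
  have hq1' : (0:ℝ) < 1 - q := by linarith
  have hA : (0:ℝ) < ‖a‖ + 1 := by positivity
  -- choose N
  obtain ⟨N, hN⟩ : ∃ N : ℕ, q ^ N < (1 - q) / (2 * (‖a‖ + 1)) := by
    have := tendsto_pow_atTop_nhds_zero_of_lt_one hq0.le hq1
    have hpos : (0:ℝ) < (1 - q) / (2 * (‖a‖ + 1)) := by positivity
    rcases (this.eventually (gt_mem_nhds hpos)).exists with ⟨N, hN⟩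
    exact ⟨N, hN⟩
  have key : ∀ i, N ≤ i → q ^ i * ‖a‖ ≤ 1 / 2 := by
    intro i hi
    have h1 : q ^ i ≤ q ^ N := pow_le_pow_of_le_one hq0.le hq1.le hi
    have h2 : q ^ N * (‖a‖ + 1) ≤ (1 - q) / 2 := by
      have := hN.le
      calc q ^ N * (‖a‖ + 1) ≤ (1 - q) / (2 * (‖a‖ + 1)) * (‖a‖ + 1) := by
            apply mul_le_mul_of_nonneg_right this hA.le
        _ = (1 - q) / 2 := by field_simp
    nlinarith [pow_nonneg hq0.le i, norm_nonneg a]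
  -- tail product bound for n ≥ N
  have tail : ∀ n, N ≤ n → (1:ℝ)/2 ≤ ‖∏ i ∈ Finset.Ico N n, ((1:ℂ) - (q:ℂ) ^ i * a)‖ := by
    intro n hn
    have sum_le : ∑ i ∈ Finset.Ico N n, q ^ i * ‖a‖ ≤ 1 / 2 := by
      rw [Finset.sum_Ico_eq_sum_range]
      have : ∀ i, q ^ (N + i) * ‖a‖ = q ^ N * ‖a‖ * q ^ i := by
        intro i; rw [pow_add]; ring
      simp_rw [this]
      rw [← Finset.mul_sum]
      calc q ^ N * ‖a‖ * ∑ i ∈ Finset.range (n - N), q ^ i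
          ≤ q ^ N * ‖a‖ * (1 / (1 - q)) := by
            apply mul_le_mul_of_nonneg_left (geom_bound q hq0.le hq1 _) (by positivity)
        _ ≤ 1 / 2 := by
            have h2 : q ^ N * (‖a‖ + 1) ≤ (1 - q) / 2 := by
              calc q ^ N * (‖a‖ + 1) ≤ (1 - q) / (2 * (‖a‖ + 1)) * (‖a‖ + 1) := by
                    apply mul_le_mul_of_nonneg_right hN.le hA.le
                _ = (1 - q) / 2 := by field_simp
            rw [mul_one_div, div_le_div_iff₀ hq1' (by norm_num : (0:ℝ) < 2)]
            nlinarith [pow_nonneg hq0.le N, norm_nonneg a]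
    calc (1:ℝ)/2 ≤ 1 - ∑ i ∈ Finset.Ico N n, q ^ i * ‖a‖ := by linarith
      _ ≤ ∏ i ∈ Finset.Ico N n, (1 - q ^ i * ‖a‖) := by
          apply one_sub_sum_le_prod
          · intro i hi
            have := key i (Finset.mem_Ico.1 hi).1
            linarith [mul_nonneg (pow_nonneg hq0.le i) (norm_nonneg a)]
          · intro i hi
            have := key i (Finset.mem_Ico.1 hi).1
            linarith
      _ ≤ ∏ i ∈ Finset.Ico N n, ‖(1:ℂ) - (q:ℂ) ^ i * a‖ := by
          apply Finset.prod_le_prod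
          · intro i hi
            have := key i (Finset.mem_Ico.1 hi).1
            linarith
          · intro i hi
            have hn' : ‖(q:ℂ) ^ i * a‖ = q ^ i * ‖a‖ := by
              simp [norm_mul, norm_pow, Complex.norm_real, abs_of_pos hq0]
            calc 1 - q ^ i * ‖a‖ = ‖(1:ℂ)‖ - ‖(q:ℂ) ^ i * a‖ := by rw [hn']; simp
              _ ≤ ‖(1:ℂ) - (q:ℂ) ^ i * a‖ := norm_sub_norm_le _ _
      _ = ‖∏ i ∈ Finset.Ico N n, ((1:ℂ) - (q:ℂ) ^ i * a)‖ := (norm_prod _ _).symm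
  -- min over initial segment
  set c0 : ℝ := (Finset.range (N + 1)).inf' (by simp) (fun n => ‖qPoch (q:ℂ) a n‖) with hc0
  have hc0pos : 0 < c0 := by
    rw [hc0, Finset.lt_inf'_iff]
    intro n _
    exact norm_pos_iff.2 (qPoch_ne_zero _ _ _ h)
  refine ⟨c0 / 2, by positivity, fun n => ?_⟩
  rcases le_or_gt n N with hn | hn
  · have : c0 ≤ ‖qPoch (q:ℂ) a n‖ :=
      Finset.inf'_le _ (Finset.mem_range.2 (Nat.lt_succ_of_le hn))
    linarith
  · have hsplit : qPoch (q:ℂ) a n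
        = qPoch (q:ℂ) a N * ∏ i ∈ Finset.Ico N n, ((1:ℂ) - (q:ℂ) ^ i * a) := by
      unfold qPoch
      rw [Finset.prod_range_mul_prod_Ico _ hn.le]
    rw [hsplit, norm_mul]
    have h1 : c0 ≤ ‖qPoch (q:ℂ) a N‖ :=
      Finset.inf'_le _ (Finset.mem_range.2 (Nat.lt_succ_self N))
    have h2 := tail n hn.le
    calc c0 / 2 = c0 * (1/2) := by ring
      _ ≤ ‖qPoch (q:ℂ) a N‖ * ‖∏ i ∈ Finset.Ico N n, ((1:ℂ) - (q:ℂ) ^ i * a)‖ :=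
          mul_le_mul h1 h2 (by norm_num) (norm_nonneg _)


lemma qHyp_summable (q : ℝ) (hq0 : 0 < q) (hq1 : q < 1) (α β γ z : ℂ)
    (hγ : ∀ k : ℕ, (1 : ℂ) - (q : ℂ) ^ k * γ ≠ 0) (hz : ‖z‖ < 1) :
    Summable (fun n : ℕ => qPoch q α n * qPoch q β n / (qPoch q γ n * qPoch q q n) * z ^ n) := by
  have hqq : ∀ k : ℕ, (1 : ℂ) - (q : ℂ) ^ k * (q : ℂ) ≠ 0 := by
    intro k
    have hlt : q ^ (k + 1) < 1 := pow_lt_one₀ hq0.le hq1 (Nat.succ_ne_zero k)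
    have : ((1 - q ^ (k + 1) : ℝ) : ℂ) = 1 - (q : ℂ) ^ k * (q : ℂ) := by
      push_cast [pow_succ]; ring
    rw [← this]
    exact Complex.ofReal_ne_zero.mpr (by linarith)
  obtain ⟨cγ, hcγ, hγlb⟩ := qPoch_norm_lb q hq0 hq1 γ hγ
  obtain ⟨cq, hcq, hqlb⟩ := qPoch_norm_lb q hq0 hq1 (q : ℂ) hqq
  set K : ℝ := Real.exp (‖α‖ / (1 - q)) * Real.exp (‖β‖ / (1 - q)) / (cγ * cq) with hK
  apply Summable.of_norm_bounded (g := fun n : ℕ => K * ‖z‖ ^ n)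
  · exact (summable_geometric_of_lt_one (norm_nonneg z) hz).mul_left K
  · intro n
    have hCpos : 0 < ‖qPoch (q:ℂ) γ n‖ := lt_of_lt_of_le hcγ (hγlb n)
    have hDpos : 0 < ‖qPoch (q:ℂ) (q:ℂ) n‖ := lt_of_lt_of_le hcq (hqlb n)
    rw [norm_mul, norm_div, norm_mul, norm_mul, norm_pow]
    apply mul_le_mul_of_nonneg_right _ (by positivity)
    apply div_le_div₀ (by positivity)
      (mul_le_mul (qPoch_norm_le q hq0 hq1 α n) (qPoch_norm_le q hq0 hq1 β n)
        (norm_nonneg _) (Real.exp_nonneg _))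
      (by positivity)
      (mul_le_mul (hγlb n) (hqlb n) hcq.le (norm_nonneg _))

/-- Contiguous relation: (α−γ)·φ_q(α,β;qγ;z) = (1−γ)α·φ_q(α,β;γ;z) − (1−α)γ·φ_q(qα,β;qγ;z). -/
theorem qHyp_contiguous_two (q : ℝ) (hq0 : 0 < q) (hq1 : q < 1) (α β γ z : ℂ)
    (hγ : ∀ k : ℕ, (1 : ℂ) - (q : ℂ) ^ k * γ ≠ 0) (hz : ‖z‖ < 1) :
    (α - γ) * qHyp q α β (q * γ) z
      = (1 - γ) * α * qHyp q α β γ z - (1 - α) * γ * qHyp q (q * α) β (q * γ) z := by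
  have hz' : ‖z‖ < 1 := hz
  have hqγ : ∀ k : ℕ, (1 : ℂ) - (q : ℂ) ^ k * ((q : ℂ) * γ) ≠ 0 := by
    intro k
    have := hγ (k + 1)
    rw [pow_succ] at this
    rw [show (q:ℂ) ^ k * ((q:ℂ) * γ) = (q:ℂ) ^ k * (q:ℂ) * γ by ring]
    exact this
  have hqq : ∀ k : ℕ, (1 : ℂ) - (q : ℂ) ^ k * (q : ℂ) ≠ 0 := by
    intro k
    have hlt : q ^ (k + 1) < 1 := pow_lt_one₀ hq0.le hq1 (Nat.succ_ne_zero k)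
    have : ((1 - q ^ (k + 1) : ℝ) : ℂ) = 1 - (q : ℂ) ^ k * (q : ℂ) := by
      push_cast [pow_succ]; ring
    rw [← this]
    exact Complex.ofReal_ne_zero.mpr (by linarith)
  have hg : Summable (fun n : ℕ =>
      qPoch q α n * qPoch q β n / (qPoch q γ n * qPoch q q n) * z ^ n) :=
    qHyp_summable q hq0 hq1 α β γ z hγ hz'
  have hh : Summable (fun n : ℕ =>
      qPoch q ((q:ℂ) * α) n * qPoch q β n / (qPoch q ((q:ℂ) * γ) n * qPoch q q n) * z ^ n) :=
    qHyp_summable q hq0 hq1 ((q:ℂ)*α) β ((q:ℂ)*γ) z hqγ hz'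
  unfold qHyp
  rw [← tsum_mul_left, ← tsum_mul_left, ← tsum_mul_left,
    ← Summable.tsum_sub (hg.mul_left _) (hh.mul_left _)]
  apply tsum_congr
  intro n
  have hC : qPoch (q:ℂ) γ n ≠ 0 := qPoch_ne_zero _ _ _ hγ
  have hC' : qPoch (q:ℂ) ((q:ℂ)*γ) n ≠ 0 := qPoch_ne_zero _ _ _ hqγ
  have hD : qPoch (q:ℂ) (q:ℂ) n ≠ 0 := qPoch_ne_zero _ _ _ hqq
  have h1 : (1 - γ) * qPoch (q:ℂ) ((q:ℂ)*γ) n = qPoch (q:ℂ) γ n * (1 - (q:ℂ)^n * γ) := by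
    rw [← qPoch_shift, qPoch_succ]
  have h2 : (1 - α) * qPoch (q:ℂ) ((q:ℂ)*α) n = qPoch (q:ℂ) α n * (1 - (q:ℂ)^n * α) := by
    rw [← qPoch_shift, qPoch_succ]
  have key : (1 - γ) / qPoch (q:ℂ) γ n = (1 - (q:ℂ)^n * γ) / qPoch (q:ℂ) ((q:ℂ)*γ) n := by
    rw [div_eq_div_iff hC hC']
    linear_combination h1
  linear_combination
    (-(α * qPoch (q:ℂ) α n * qPoch (q:ℂ) β n * z ^ n / qPoch (q:ℂ) (q:ℂ) n)) * key
    + (γ * qPoch (q:ℂ) β n * z ^ n / (qPoch (q:ℂ) ((q:ℂ)*γ) n * qPoch (q:ℂ) (q:ℂ) n)) * h2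
end
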